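/- Coupling estimate for the interacting particle system: let x and x̃ solve, driven by the same Brownian motions, the N-particle SDEs dx_{i,t} = g(x_{i,t}, ω_i) dt − (1/N) Σ_j ∂_x f(x_{i,t} − x_{j,t}, ω_i, ω_j) dt + dB_{i,t} and the analogous system with disorder χ_M(ω_i) and initial conditions ξ_{i,M}. Then there is a constant C (depending only on the Lipschitz constants C_f, C_g) such that almost surely, for all t ≥ 0, (1/N) Σ_{i=1}^N sup_{s ≤ t} |x_{i,s} − x̃_{i,s}| ≤ e^{Ct} ( (Ct/N) Σ_i |ω_i − χ_M(ω_i)| (1 + |ω_i|^{k₂} + |χ_M(ω_i)|^{k₂}) + (1/N) Σ_i |ξ_i − ξ_{i,M}| ). -/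

import Mathlib

open MeasureTheory

/-- Truncation at level `M`: `χ_M(ω) = (ω ∧ M) ∨ (−M)`. -/
noncomputable def chiM (M w : ℝ) : ℝ := max (min w M) (-M)

/-- Coupling estimate for the interacting particle system: if `x` and `x̃` solve the
`N`-particle mean-field SDEs driven by the same Brownian paths `B`, with disorders
`ω_i` and `χ_M(ω_i)` and initial conditions `ξ_i` and `ξ_{i,M}` respectively, then there
is a constant `C` depending only on `C_f, C_g` such that, pathwise, for all `t ≥ 0`,
`(1/N) Σ_i sup_{s≤t} |x_{i,s} − x̃_{i,s}|`
` ≤ e^{Ct} ( (Ct/N) Σ_i |ω_i − χ_M(ω_i)|(1+|ω_i|^{k₂}+|χ_M(ω_i)|^{k₂}) + (1/N) Σ_i |ξ_i − ξ_{i,M}| )`. -/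
theorem stmt8 (Cf Cg k2 : ℝ) (hCf : 0 ≤ Cf) (hCg : 0 ≤ Cg) (hk2 : 0 ≤ k2) :
    ∃ C : ℝ, 0 < C ∧
      ∀ (N : ℕ), 0 < N →
      ∀ (f' : ℝ → ℝ → ℝ → ℝ) (g : ℝ → ℝ → ℝ),
      (∀ a b u v u' v', |f' a u v - f' b u' v'| ≤ Cf * (|a - b| + |u - u'| + |v - v'|)) →
      (∀ a u v, |f' a u v| ≤ Cf) →
      (∀ x u v, |g x u - g x v| ≤ Cg * |u - v| * (1 + |u| ^ k2 + |v| ^ k2)) →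
      (∀ x y u, |g x u - g y u| ≤ Cg * |x - y|) →
      ∀ (M : ℝ) (ω ξ ξM : Fin N → ℝ) (B x xt : Fin N → ℝ → ℝ),
      (∀ i, Continuous (x i)) → (∀ i, Continuous (xt i)) →
      (∀ i t, 0 ≤ t → x i t = ξ i
          + (∫ s in (0:ℝ)..t, (g (x i s) (ω i)
              - (N : ℝ)⁻¹ * ∑ j, f' (x i s - x j s) (ω i) (ω j)))
          + B i t) →
      (∀ i t, 0 ≤ t → xt i t = ξM i
          + (∫ s in (0:ℝ)..t, (g (xt i s) (chiM M (ω i))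
              - (N : ℝ)⁻¹ * ∑ j, f' (xt i s - xt j s) (chiM M (ω i)) (chiM M (ω j))))
          + B i t) →
      ∀ t : ℝ, 0 ≤ t →
        (N : ℝ)⁻¹ * ∑ i, (⨆ s : Set.Icc (0:ℝ) t, |x i (s : ℝ) - xt i (s : ℝ)|)
          ≤ Real.exp (C * t) *
            ((C * t / N) * ∑ i, |ω i - chiM M (ω i)|
                * (1 + |ω i| ^ k2 + |chiM M (ω i)| ^ k2)
              + (N : ℝ)⁻¹ * ∑ i, |ξ i - ξM i|) := by
  classical
  refine ⟨Cg + 2 * Cf + 1, by positivity, ?_⟩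
  intro N hN f' g hf'lip hf'bd hgw hgxL M ω ξ ξM B x xt hxc hxtc hx hxt t ht
  set C : ℝ := Cg + 2 * Cf + 1 with hCdef
  have hCpos : (0:ℝ) < C := by positivity
  set K : ℝ := Cg + 2 * Cf with hKdef
  have hK0 : (0:ℝ) ≤ K := by positivity
  have hKC : K ≤ C := by simp [hKdef, hCdef]
  have hNR : (0:ℝ) < (N:ℝ) := by exact_mod_cast hN
  have hNne : (N:ℝ) ≠ 0 := ne_of_gt hNR
  -- named auxiliary functions
  obtain ⟨χ, hχdef⟩ : ∃ χ : Fin N → ℝ, ∀ i, χ i = chiM M (ω i) := ⟨_, fun _ => rfl⟩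
  obtain ⟨W, hWdef⟩ : ∃ W : Fin N → ℝ,
      ∀ i, W i = |ω i - χ i| * (1 + |ω i| ^ k2 + |χ i| ^ k2) := ⟨_, fun _ => rfl⟩
  obtain ⟨Hx, hHxdef⟩ : ∃ Hx : Fin N → ℝ → ℝ, ∀ i s, Hx i s
      = g (x i s) (ω i) - (N : ℝ)⁻¹ * ∑ j, f' (x i s - x j s) (ω i) (ω j) :=
    ⟨_, fun _ _ => rfl⟩
  obtain ⟨Ht, hHtdef⟩ : ∃ Ht : Fin N → ℝ → ℝ, ∀ i s, Ht i s
      = g (xt i s) (χ i) - (N : ℝ)⁻¹ * ∑ j, f' (xt i s - xt j s) (χ i) (χ j) :=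
    ⟨_, fun _ _ => rfl⟩
  obtain ⟨DT, hDTdef⟩ : ∃ DT : ℝ → ℝ, ∀ s, DT s = ∑ i, |x i s - xt i s| := ⟨_, fun _ => rfl⟩
  set AT : ℝ := ∑ i, W i with hATdef
  set ST : ℝ := ∑ i, |ξ i - ξM i| with hSTdef
  have hATnn : 0 ≤ AT := Finset.sum_nonneg fun i _ => by
    rw [hWdef]
    have := Real.rpow_nonneg (abs_nonneg (ω i)) k2
    have := Real.rpow_nonneg (abs_nonneg (χ i)) k2
    positivity
  have hSTnn : 0 ≤ ST := Finset.sum_nonneg fun i _ => abs_nonneg _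
  have hDTnn : ∀ s, 0 ≤ DT s := fun s => by
    rw [hDTdef]; exact Finset.sum_nonneg fun i _ => abs_nonneg _
  have hwW : ∀ i, |ω i - χ i| ≤ W i := fun i => by
    rw [hWdef]
    have h1 := Real.rpow_nonneg (abs_nonneg (ω i)) k2
    have h2 := Real.rpow_nonneg (abs_nonneg (χ i)) k2
    nlinarith [abs_nonneg (ω i - χ i)]
  -- continuity
  have hgcont : ∀ w0 : ℝ, Continuous fun y => g y w0 := by
    intro w0
    refine (LipschitzWith.of_dist_le_mul (K := Real.toNNReal Cg) fun a b => ?_).continuous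
    rw [Real.dist_eq, Real.dist_eq, Real.coe_toNNReal Cg hCg]
    exact hgxL a b w0
  have hf'cont : ∀ u0 v0 : ℝ, Continuous fun a => f' a u0 v0 := by
    intro u0 v0
    refine (LipschitzWith.of_dist_le_mul (K := Real.toNNReal Cf) fun a b => ?_).continuous
    rw [Real.dist_eq, Real.dist_eq, Real.coe_toNNReal Cf hCf]
    have := hf'lip a b u0 v0 u0 v0
    simpa using this
  have hHxcont : ∀ i, Continuous (Hx i) := by
    intro i
    have : Hx i = fun s => g (x i s) (ω i)
        - (N : ℝ)⁻¹ * ∑ j, f' (x i s - x j s) (ω i) (ω j) := funext (hHxdef i)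
    rw [this]
    exact ((hgcont (ω i)).comp (hxc i)).sub (continuous_const.mul
      (continuous_finset_sum _ fun j _ => (hf'cont (ω i) (ω j)).comp ((hxc i).sub (hxc j))))
  have hHtcont : ∀ i, Continuous (Ht i) := by
    intro i
    have : Ht i = fun s => g (xt i s) (χ i)
        - (N : ℝ)⁻¹ * ∑ j, f' (xt i s - xt j s) (χ i) (χ j) := funext (hHtdef i)
    rw [this]
    exact ((hgcont (χ i)).comp (hxtc i)).sub (continuous_const.mul
      (continuous_finset_sum _ fun j _ => (hf'cont (χ i) (χ j)).comp ((hxtc i).sub (hxtc j))))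
  have hHcont : ∀ i, Continuous fun s => |Hx i s - Ht i s| :=
    fun i => ((hHxcont i).sub (hHtcont i)).abs
  have hDTcont : Continuous DT := by
    have : DT = fun s => ∑ i, |x i s - xt i s| := funext hDTdef
    rw [this]
    exact continuous_finset_sum _ fun i _ => ((hxc i).sub (hxtc i)).abs
  have hGcont : Continuous fun s => ∑ i, |Hx i s - Ht i s| :=
    continuous_finset_sum _ fun i _ => hHcont i
  -- difference of integral equations
  have hu : ∀ i s, 0 ≤ s → x i s - xt i s
      = (ξ i - ξM i) + ∫ r in (0:ℝ)..s, (Hx i r - Ht i r) := by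
    intro i s hs
    rw [intervalIntegral.integral_sub ((hHxcont i).intervalIntegrable 0 s)
      ((hHtcont i).intervalIntegrable 0 s)]
    have e1 := hx i s hs
    have e2 := hxt i s hs
    have hχ' : ∀ j, chiM M (ω j) = χ j := fun j => (hχdef j).symm
    simp only [← hHxdef] at e1
    simp only [hχ', ← hHtdef] at e2
    rw [e1, e2]; ring
  -- pointwise bound on each |u i s|
  have hubd : ∀ i s, 0 ≤ s → |x i s - xt i s|
      ≤ |ξ i - ξM i| + ∫ r in (0:ℝ)..s, |Hx i r - Ht i r| := by
    intro i s hs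
    rw [hu i s hs]
    refine (abs_add_le _ _).trans (add_le_add_right ?_ _)
    exact intervalIntegral.abs_integral_le_integral_abs hs
  -- pointwise bound on the integrand
  have hHbd : ∀ i s, |Hx i s - Ht i s|
      ≤ (Cg + Cf) * |x i s - xt i s| + Cf * ((N:ℝ)⁻¹ * DT s)
        + (Cg + Cf) * W i + Cf * ((N:ℝ)⁻¹ * AT) := by
    intro i s
    have hg1 : |g (x i s) (ω i) - g (xt i s) (χ i)|
        ≤ Cg * |x i s - xt i s| + Cg * W i := by
      calc |g (x i s) (ω i) - g (xt i s) (χ i)|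
          ≤ |g (x i s) (ω i) - g (x i s) (χ i)|
            + |g (x i s) (χ i) - g (xt i s) (χ i)| := abs_sub_le _ _ _
        _ ≤ Cg * |ω i - χ i| * (1 + |ω i| ^ k2 + |χ i| ^ k2)
            + Cg * |x i s - xt i s| := add_le_add (hgw _ _ _) (hgxL _ _ _)
        _ = Cg * |x i s - xt i s| + Cg * W i := by rw [hWdef]; ring
    have hfj : ∀ j, |f' (x i s - x j s) (ω i) (ω j) - f' (xt i s - xt j s) (χ i) (χ j)|
        ≤ Cf * (|x i s - xt i s| + |x j s - xt j s| + W i + W j) := by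
      intro j
      refine (hf'lip _ _ _ _ _ _).trans ?_
      have h1 : |x i s - x j s - (xt i s - xt j s)|
          ≤ |x i s - xt i s| + |x j s - xt j s| := by
        have h2 : x i s - x j s - (xt i s - xt j s)
            = (x i s - xt i s) - (x j s - xt j s) := by ring
        rw [h2]; exact abs_sub _ _
      have := hwW i
      have := hwW j
      have hmul : |x i s - x j s - (xt i s - xt j s)| + |ω i - χ i| + |ω j - χ j|
          ≤ |x i s - xt i s| + |x j s - xt j s| + W i + W j := by linarith
      exact mul_le_mul_of_nonneg_left hmul hCf
    have hsum : |∑ j, (f' (x i s - x j s) (ω i) (ω j) - f' (xt i s - xt j s) (χ i) (χ j))|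
        ≤ ∑ j, Cf * (|x i s - xt i s| + |x j s - xt j s| + W i + W j) :=
      (Finset.abs_sum_le_sum_abs _ _).trans (Finset.sum_le_sum fun j _ => hfj j)
    have hsum2 : ∑ j : Fin N, Cf * (|x i s - xt i s| + |x j s - xt j s| + W i + W j)
        = (N:ℝ) * (Cf * |x i s - xt i s|) + Cf * DT s + (N:ℝ) * (Cf * W i) + Cf * AT := by
      rw [hDTdef, hATdef]
      simp only [mul_add, Finset.sum_add_distrib, Finset.sum_const, Finset.card_univ,
        Fintype.card_fin, nsmul_eq_mul, ← Finset.mul_sum]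
      try ring
    have hkey : Hx i s - Ht i s
        = (g (x i s) (ω i) - g (xt i s) (χ i))
          - (N:ℝ)⁻¹ * ∑ j, (f' (x i s - x j s) (ω i) (ω j)
            - f' (xt i s - xt j s) (χ i) (χ j)) := by
      rw [hHxdef, hHtdef, Finset.sum_sub_distrib]; ring
    calc |Hx i s - Ht i s|
        ≤ |g (x i s) (ω i) - g (xt i s) (χ i)|
          + (N:ℝ)⁻¹ * |∑ j, (f' (x i s - x j s) (ω i) (ω j)
            - f' (xt i s - xt j s) (χ i) (χ j))| := by
          rw [hkey]
          refine (abs_sub _ _).trans ?_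
          rw [abs_mul, abs_of_nonneg (inv_nonneg.2 hNR.le)]
      _ ≤ (Cg * |x i s - xt i s| + Cg * W i)
          + (N:ℝ)⁻¹ * ((N:ℝ) * (Cf * |x i s - xt i s|) + Cf * DT s
            + (N:ℝ) * (Cf * W i) + Cf * AT) := by
          refine add_le_add hg1 (mul_le_mul_of_nonneg_left ?_ (inv_nonneg.2 hNR.le))
          exact hsum.trans_eq hsum2
      _ = (Cg + Cf) * |x i s - xt i s| + Cf * ((N:ℝ)⁻¹ * DT s)
          + (Cg + Cf) * W i + Cf * ((N:ℝ)⁻¹ * AT) := by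
          field_simp
          try ring
  -- bound on the total integrand
  have hGbd : ∀ s, ∑ i, |Hx i s - Ht i s| ≤ K * DT s + K * AT := by
    intro s
    calc ∑ i, |Hx i s - Ht i s|
        ≤ ∑ i, ((Cg + Cf) * |x i s - xt i s| + Cf * ((N:ℝ)⁻¹ * DT s)
            + (Cg + Cf) * W i + Cf * ((N:ℝ)⁻¹ * AT)) :=
          Finset.sum_le_sum fun i _ => hHbd i s
      _ = (Cg + Cf) * DT s + (N:ℝ) * (Cf * ((N:ℝ)⁻¹ * DT s))
            + (Cg + Cf) * AT + (N:ℝ) * (Cf * ((N:ℝ)⁻¹ * AT)) := by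
          rw [hDTdef, hATdef]
          simp only [Finset.sum_add_distrib, Finset.sum_const, Finset.card_univ,
            Fintype.card_fin, nsmul_eq_mul, ← Finset.mul_sum]
      _ = K * DT s + K * AT := by rw [hKdef]; field_simp; ring
  -- master integral inequality
  have hmaster : ∀ s, 0 ≤ s →
      DT s ≤ ST + (K * (∫ r in (0:ℝ)..s, DT r) + K * AT * s) := by
    intro s hs
    have h1 : DT s ≤ ST + ∑ i, ∫ r in (0:ℝ)..s, |Hx i r - Ht i r| := by
      rw [hDTdef, hSTdef, ← Finset.sum_add_distrib]
      exact Finset.sum_le_sum fun i _ => hubd i s hs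
    have h2 : ∑ i, ∫ r in (0:ℝ)..s, |Hx i r - Ht i r|
        = ∫ r in (0:ℝ)..s, ∑ i, |Hx i r - Ht i r| :=
      (intervalIntegral.integral_finset_sum
        (fun i _ => (hHcont i).intervalIntegrable 0 s)).symm
    have h3 : ∫ r in (0:ℝ)..s, ∑ i, |Hx i r - Ht i r|
        ≤ ∫ r in (0:ℝ)..s, (K * DT r + K * AT) :=
      intervalIntegral.integral_mono_on hs (hGcont.intervalIntegrable 0 s)
        (((continuous_const.mul hDTcont).add continuous_const).intervalIntegrable 0 s)
        (fun r _ => hGbd r)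
    have h4 : ∫ r in (0:ℝ)..s, (K * DT r + K * AT)
        = K * (∫ r in (0:ℝ)..s, DT r) + K * AT * s := by
      rw [intervalIntegral.integral_add (f := fun r => K * DT r) ((continuous_const.mul hDTcont).intervalIntegrable 0 s)
        (intervalIntegrable_const), intervalIntegral.integral_const_mul,
        intervalIntegral.integral_const]
      simp [smul_eq_mul]
      ring
    calc DT s ≤ ST + ∑ i, ∫ r in (0:ℝ)..s, |Hx i r - Ht i r| := h1
      _ = ST + ∫ r in (0:ℝ)..s, ∑ i, |Hx i r - Ht i r| := by rw [h2]
      _ ≤ ST + ∫ r in (0:ℝ)..s, (K * DT r + K * AT) := by linarith [h3]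
      _ = ST + (K * (∫ r in (0:ℝ)..s, DT r) + K * AT * s) := by rw [h4]
  -- Grönwall
  set ε : ℝ := ST + C * AT * t with hεdef
  have hψderiv : ∀ s : ℝ, HasDerivAt (fun v => ∫ r in (0:ℝ)..v, DT r) (DT s) s :=
    fun s => (hDTcont.integral_hasStrictDerivAt 0 s).hasDerivAt
  have hψcont : Continuous fun v => ∫ r in (0:ℝ)..v, DT r :=
    continuous_iff_continuousAt.2 fun s => (hψderiv s).continuousAt
  have hψnn : ∀ s, 0 ≤ s → 0 ≤ ∫ r in (0:ℝ)..s, DT r :=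
    fun s hs => intervalIntegral.integral_nonneg hs fun r _ => hDTnn r
  have hgron : ∫ r in (0:ℝ)..t, DT r ≤ gronwallBound 0 C ε (t - 0) := by
    refine norm_le_gronwallBound_of_norm_deriv_right_le (f := fun v => ∫ r in (0:ℝ)..v, DT r)
      (f' := DT) hψcont.continuousOn (fun s _ => (hψderiv s).hasDerivWithinAt)
      (by simp) ?_ t ⟨ht, le_rfl⟩ |>.trans_eq' ?_
    · intro s hs
      rw [Real.norm_eq_abs, Real.norm_eq_abs, abs_of_nonneg (hDTnn s),
        abs_of_nonneg (hψnn s hs.1)]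
      have h1 := hmaster s hs.1
      have h2 : K * (∫ r in (0:ℝ)..s, DT r) ≤ C * (∫ r in (0:ℝ)..s, DT r) :=
        mul_le_mul_of_nonneg_right hKC (hψnn s hs.1)
      have h3 : K * AT * s ≤ C * AT * t :=
        mul_le_mul (mul_le_mul_of_nonneg_right hKC hATnn) hs.2.le hs.1
          (mul_nonneg hCpos.le hATnn)
      rw [hεdef]; linarith
    · rw [Real.norm_eq_abs, abs_of_nonneg (hψnn t ht)]
  have hψle : ∫ r in (0:ℝ)..t, DT r ≤ ε / C * (Real.exp (C * t) - 1) := by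
    have := hgron
    rw [gronwallBound_of_K_ne_0 hCpos.ne'] at this
    simpa using this
  -- final supremum bound
  have hexp1 : (1:ℝ) ≤ Real.exp (C * t) := by
    rw [← Real.exp_zero]
    exact Real.exp_le_exp.2 (by positivity)
  have hmono : ∀ i s, 0 ≤ s → s ≤ t →
      (∫ r in (0:ℝ)..s, |Hx i r - Ht i r|) ≤ ∫ r in (0:ℝ)..t, |Hx i r - Ht i r| := by
    intro i s hs hst
    exact intervalIntegral.integral_mono_interval le_rfl hs hst
      (Filter.Eventually.of_forall fun r => abs_nonneg _)
      ((hHcont i).intervalIntegrable 0 t)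
  have hsupbd : ∀ i, (⨆ s : Set.Icc (0:ℝ) t, |x i (s:ℝ) - xt i (s:ℝ)|)
      ≤ |ξ i - ξM i| + ∫ r in (0:ℝ)..t, |Hx i r - Ht i r| := by
    intro i
    haveI : Nonempty (Set.Icc (0:ℝ) t) := Set.nonempty_Icc_subtype ht
    refine ciSup_le fun s => ?_
    exact (hubd i s s.2.1).trans (add_le_add_right (hmono i s s.2.1 s.2.2) _)
  have hfinal : ∑ i, (⨆ s : Set.Icc (0:ℝ) t, |x i (s:ℝ) - xt i (s:ℝ)|)
      ≤ ε * Real.exp (C * t) := by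
    have h1 : ∑ i, (⨆ s : Set.Icc (0:ℝ) t, |x i (s:ℝ) - xt i (s:ℝ)|)
        ≤ ST + ∫ r in (0:ℝ)..t, ∑ i, |Hx i r - Ht i r| := by
      rw [hSTdef, intervalIntegral.integral_finset_sum
        (fun i _ => (hHcont i).intervalIntegrable 0 t), ← Finset.sum_add_distrib]
      exact Finset.sum_le_sum fun i _ => hsupbd i
    have h3 : ∫ r in (0:ℝ)..t, ∑ i, |Hx i r - Ht i r|
        ≤ ∫ r in (0:ℝ)..t, (K * DT r + K * AT) :=
      intervalIntegral.integral_mono_on ht (hGcont.intervalIntegrable 0 t)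
        (((continuous_const.mul hDTcont).add continuous_const).intervalIntegrable 0 t)
        (fun r _ => hGbd r)
    have h4 : ∫ r in (0:ℝ)..t, (K * DT r + K * AT)
        = K * (∫ r in (0:ℝ)..t, DT r) + K * AT * t := by
      rw [intervalIntegral.integral_add (f := fun r => K * DT r) ((continuous_const.mul hDTcont).intervalIntegrable 0 t)
        (intervalIntegrable_const), intervalIntegral.integral_const_mul,
        intervalIntegral.integral_const]
      simp [smul_eq_mul]
      ring
    have h5 : K * (∫ r in (0:ℝ)..t, DT r) ≤ C * (∫ r in (0:ℝ)..t, DT r) :=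
      mul_le_mul_of_nonneg_right hKC (hψnn t ht)
    have h6 : C * (∫ r in (0:ℝ)..t, DT r) ≤ ε * (Real.exp (C * t) - 1) := by
      have := mul_le_mul_of_nonneg_left hψle hCpos.le
      calc C * (∫ r in (0:ℝ)..t, DT r) ≤ C * (ε / C * (Real.exp (C * t) - 1)) := this
        _ = ε * (Real.exp (C * t) - 1) := by field_simp
    have h7 : K * AT * t ≤ C * AT * t :=
      mul_le_mul_of_nonneg_right (mul_le_mul_of_nonneg_right hKC hATnn) ht
    have h8 : ST + C * AT * t + ε * (Real.exp (C * t) - 1) = ε * Real.exp (C * t) := by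
      rw [hεdef]; ring
    calc ∑ i, (⨆ s : Set.Icc (0:ℝ) t, |x i (s:ℝ) - xt i (s:ℝ)|)
        ≤ ST + ∫ r in (0:ℝ)..t, ∑ i, |Hx i r - Ht i r| := h1
      _ ≤ ST + (K * (∫ r in (0:ℝ)..t, DT r) + K * AT * t) := by
          have := h3.trans_eq h4; linarith
      _ ≤ ε * Real.exp (C * t) := by linarith
  -- assemble
  have hATeq : ∑ i, |ω i - chiM M (ω i)| * (1 + |ω i| ^ k2 + |chiM M (ω i)| ^ k2) = AT := by
    rw [hATdef]
    exact Finset.sum_congr rfl fun i _ => by rw [hWdef, hχdef]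
  rw [hATeq]
  have hrhs : Real.exp (C * t) * (C * t / (N:ℝ) * AT + (N:ℝ)⁻¹ * ST)
      = (N:ℝ)⁻¹ * (ε * Real.exp (C * t)) := by
    rw [hεdef]; field_simp; ring
  rw [hrhs]
  exact mul_le_mul_of_nonneg_left hfinal (inv_nonneg.2 hNR.le)
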